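/- Let μ be a finite Borel measure on an interval (p,q) decomposed as μ = λ + Σ_i μ_{x_i} + ν where λ + ν is non-atomic and μ_{x_i} are atoms with Σ_{i>M} μ_{x_i}((p,q)) < K₀/2, and suppose (λ+ν)((u,v)) < K₀/2 for every interval (u,v) of length < L avoiding the points x_1,…,x_M. If μ assigns to every open subinterval either measure 0 or measure ≥ K₀, then μ((p,q) \ {x_1,…,x_M}) = 0. -/
import Mathlib


open MeasureTheory ENNReal

/-- Let the curvature measure `μ = λ + ν + Σᵢ cᵢ·δ_{xᵢ}` on `(p,q)` have non-atomic
part `λ + ν`, tail atoms of total mass `< K₀/2`, and suppose every interval of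
length `< L` avoiding `x₁,…,x_M` has `(λ+ν)`-measure `< K₀/2`. If every open
subinterval of `(p,q)` has `μ`-measure `0` or `≥ K₀`, then
`μ((p,q) \ {x₁,…,x_M}) = 0` (the arc is polygonal with corners at the `xᵢ`). -/
theorem polygonal_from_curvature_gap (p q : ℝ) (hpq : p < q)
    (μ lam ν A : Measure ℝ) [IsFiniteMeasure μ]
    (x : ℕ → ℝ) (cwt : ℕ → ℝ≥0∞) (M : ℕ)
    (hA : A = Measure.sum (fun i : ℕ => cwt i • Measure.dirac (x i)))
    (hμ : μ = lam + ν + A)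
    (hna : ∀ r : ℝ, (lam + ν) {r} = 0)
    (K₀ : ℝ≥0∞) (hK₀ : 0 < K₀)
    (htail : ∑' i : ℕ, (if M < i then cwt i * Measure.dirac (x i) (Set.Ioo p q) else 0)
      < K₀ / 2)
    (L : ℝ) (hL : 0 < L)
    (hsmall : ∀ u v : ℝ, u < v → v - u < L → (∀ i ≤ M, x i ∉ Set.Ioo u v) →
      (lam + ν) (Set.Ioo u v) < K₀ / 2)
    (hgap : ∀ u v : ℝ, u < v → Set.Ioo u v ⊆ Set.Ioo p q →
      μ (Set.Ioo u v) = 0 ∨ K₀ ≤ μ (Set.Ioo u v)) :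
    μ (Set.Ioo p q \ x '' {i : ℕ | i ≤ M}) = 0 := by
  have hF : (x '' {i : ℕ | i ≤ M}).Finite := (Set.finite_Iic M).image x
  apply measure_null_of_locally_null
  intro y hy
  obtain ⟨⟨hyp, hyq⟩, hyF⟩ := hy
  obtain ⟨ε, hε, hball⟩ := Metric.isOpen_iff.1 hF.isClosed.isOpen_compl y hyF
  set δ := min (min ε L) (min (y - p) (q - y)) with hδdef
  have hδ : 0 < δ := lt_min (lt_min hε hL) (lt_min (by linarith) (by linarith))
  have hδε : δ ≤ ε := le_trans (min_le_left _ _) (min_le_left _ _)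
  have hδL : δ ≤ L := le_trans (min_le_left _ _) (min_le_right _ _)
  have hδp : δ ≤ y - p := le_trans (min_le_right _ _) (min_le_left _ _)
  have hδq : δ ≤ q - y := le_trans (min_le_right _ _) (min_le_right _ _)
  set u := y - δ/3 with hu
  set v := y + δ/3 with hv
  have huv : u < v := by simp only [hu, hv]; linarith
  have hsub : Set.Ioo u v ⊆ Set.Ioo p q := by
    intro z hz
    obtain ⟨hz1, hz2⟩ := hz
    constructor <;> simp only [hu, hv] at * <;> linarith
  have hnx : ∀ i ≤ M, x i ∉ Set.Ioo u v := by
    intro i hi hmem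
    obtain ⟨h1, h2⟩ := hmem
    have hb : x i ∈ Metric.ball y ε := by
      rw [Metric.mem_ball, Real.dist_eq]
      rw [abs_sub_lt_iff]
      constructor <;> simp only [hu, hv] at * <;> linarith
    exact hball hb ⟨i, hi, rfl⟩
  have hAle : A (Set.Ioo u v)
      ≤ ∑' i : ℕ, (if M < i then cwt i * Measure.dirac (x i) (Set.Ioo p q) else 0) := by
    rw [hA, Measure.sum_apply _ measurableSet_Ioo]
    refine Summable.tsum_le_tsum (fun i => ?_) ENNReal.summable ENNReal.summable
    simp only [Measure.smul_apply, smul_eq_mul]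
    by_cases hi : M < i
    · simp only [hi, if_true]
      exact mul_le_mul_right (measure_mono hsub) _
    · simp only [hi, if_false]
      have hxi := hnx i (le_of_not_gt hi)
      rw [Measure.dirac_apply' _ measurableSet_Ioo, Set.indicator_of_notMem hxi,
        mul_zero]
  have hμlt : μ (Set.Ioo u v) < K₀ := by
    have h1 : (lam + ν) (Set.Ioo u v) < K₀ / 2 := by
      refine hsmall u v huv ?_ hnx
      simp only [hu, hv]; linarith
    have h2 : A (Set.Ioo u v) < K₀ / 2 := lt_of_le_of_lt hAle htail
    calc μ (Set.Ioo u v) = (lam + ν) (Set.Ioo u v) + A (Set.Ioo u v) := by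
          rw [hμ, Measure.add_apply]
      _ < K₀ / 2 + K₀ / 2 := ENNReal.add_lt_add h1 h2
      _ = K₀ := ENNReal.add_halves _
  rcases hgap u v huv hsub with h0 | hge
  · exact ⟨Set.Ioo u v,
      mem_nhdsWithin_of_mem_nhds (Ioo_mem_nhds (by simp only [hu]; linarith)
        (by simp only [hv]; linarith)), h0⟩
  · exact absurd hμlt (not_lt.2 hge)
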